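/- Let N ≥ 2 workers run GADMM with penalty ρ > 0, generating primal iterates θ_n^k and dual iterates λ_n^k, and suppose the unaugmented Lagrangian L_0({θ_n},{λ_n}) = Σ_{n=1}^N f_n(θ_n) + Σ_{n=1}^{N−1} ⟨λ_n, θ_n − θ_{n+1}⟩ has a saddle point ((θ*,…,θ*), (λ_1*,…,λ_{N−1}*)). Define the Lyapunov function V_k = (1/ρ) Σ_{n=1}^{N−1} ‖λ_n^k − λ_n*‖² + ρ Σ_{n odd, n>1} ‖θ_{n−1}^k − θ*‖² + ρ Σ_{n odd} ‖θ_{n+1}^k − θ*‖². Then V_k is monotonically non-increasing along the GADMM iterates: V_{k+1} ≤ V_k for all k. -/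

import Mathlib

open Finset Filter
open scoped RealInnerProductSpace Topology

lemma aux_eps {a b c : ℝ} (hc : 0 ≤ c) (h : ∀ t : ℝ, 0 < t → t ≤ 1 → b ≤ a + t * c) : b ≤ a := by
  refine le_of_forall_pos_le_add fun ε hε => ?_
  have ht1 : (0:ℝ) < min 1 (ε / (c+1)) := lt_min one_pos (div_pos hε (by linarith))
  have := h _ ht1 (min_le_left _ _)
  have hle : min 1 (ε / (c+1)) * c ≤ ε := by
    calc min 1 (ε / (c+1)) * c ≤ (ε / (c+1)) * c :=
          mul_le_mul_of_nonneg_right (min_le_right _ _) hc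
      _ ≤ (ε / (c+1)) * (c+1) := by
          apply mul_le_mul_of_nonneg_left (by linarith) (le_of_lt (div_pos hε (by linarith)))
      _ = ε := by field_simp
  linarith

section

variable {E : Type*} [NormedAddCommGroup E] [InnerProductSpace ℝ E]

lemma norm_sub_smul_sq (w u : E) (t : ℝ) :
    ‖w - t • u‖^2 = ‖w‖^2 - 2*t*⟪w,u⟫ + t^2*‖u‖^2 := by
  rw [norm_sub_sq_real, real_inner_smul_right, norm_smul]
  simp [mul_pow, sq_abs]; ring

lemma norm_add_smul_sq (w u : E) (t : ℝ) :
    ‖w + t • u‖^2 = ‖w‖^2 + 2*t*⟪w,u⟫ + t^2*‖u‖^2 := by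
  rw [norm_add_sq_real, real_inner_smul_right, norm_smul]
  simp [mul_pow, sq_abs]; ring

lemma linearize (f : E → ℝ) (hf : ConvexOn ℝ Set.univ f)
    (c₁ c₂ a b θp : E) (ρ₁ ρ₂ : ℝ) (h₁ : 0 ≤ ρ₁) (h₂ : 0 ≤ ρ₂)
    (hmin : ∀ x : E, f θp + ⟪c₁, a - θp⟫ + ⟪c₂, θp - b⟫ + ρ₁/2 * ‖a-θp‖^2 + ρ₂/2 * ‖θp-b‖^2
      ≤ f x + ⟪c₁, a - x⟫ + ⟪c₂, x - b⟫ + ρ₁/2 * ‖a-x‖^2 + ρ₂/2 * ‖x-b‖^2)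
    (x : E) :
    f θp + ⟪c₂ - c₁ + ρ₁ • (θp - a) + ρ₂ • (θp - b), θp - x⟫ ≤ f x := by
  have key : ∀ t : ℝ, 0 < t → t ≤ 1 →
      f θp + ⟪c₂ - c₁ + ρ₁ • (θp - a) + ρ₂ • (θp - b), θp - x⟫
        ≤ f x + t * ((ρ₁+ρ₂)/2 * ‖x - θp‖^2) := by
    intro t ht ht1
    set u := x - θp with hu
    have hconv : f (θp + t • u) ≤ f θp + t * (f x - f θp) := by
      have h2 := hf.2 (Set.mem_univ θp) (Set.mem_univ x)
        (show (0:ℝ) ≤ 1 - t by linarith) ht.le (by ring)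
      have : (1-t) • θp + t • x = θp + t • u := by
        rw [hu]; module
      rw [this] at h2
      simp only [smul_eq_mul] at h2; linarith
    have hm := hmin (θp + t • u)
    have e1 : a - (θp + t • u) = (a - θp) - t • u := by abel
    have e2 : (θp + t • u) - b = (θp - b) + t • u := by abel
    rw [e1, e2, norm_sub_smul_sq, norm_add_smul_sq] at hm
    simp only [inner_sub_right, inner_add_right, real_inner_smul_right] at hm
    have hexp : ⟪c₂ - c₁ + ρ₁ • (θp - a) + ρ₂ • (θp - b), θp - x⟫
        = -⟪c₂, u⟫ + ⟪c₁, u⟫ - ρ₁ * ⟪θp - a, u⟫ - ρ₂ * ⟪θp - b, u⟫ := by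
      have : θp - x = -u := by rw [hu]; abel
      rw [this, inner_neg_right, inner_add_left, inner_add_left, inner_sub_left,
        real_inner_smul_left, real_inner_smul_left]
      ring
    rw [hexp]
    have hin : ⟪θp - a, u⟫ = -⟪a - θp, u⟫ := by
      rw [← inner_neg_left]; congr 1; abel
    rw [hin]
    have hnorm : ‖x - θp‖^2 = ‖u‖^2 := by rw [hu]
    rw [hnorm]
    have ht' : 0 ≤ t := le_of_lt ht
    nlinarith [mul_le_mul_of_nonneg_left hm (le_of_lt ht), sq_nonneg t, hm,
      mul_pos ht ht]
  refine aux_eps (by positivity) key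

lemma edge_odd (ρ : ℝ) (hρ : 0 < ρ) (Lk Ls Pn Pn1 On1 Ts : E) :
    2*(⟪Lk + ρ•(Pn - On1), Pn - Ts⟫ - ⟪Lk + ρ•(Pn - Pn1), Pn1 - Ts⟫ - ⟪Ls, Pn - Pn1⟫)
    = (1/ρ)*(‖(Lk + ρ•(Pn - Pn1)) - Ls‖^2 - ‖Lk - Ls‖^2)
      + ρ*‖Pn - On1‖^2 + ρ*(‖Pn1 - Ts‖^2 - ‖On1 - Ts‖^2) := by
  have h := hρ.ne'
  simp only [← real_inner_self_eq_norm_sq]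
  simp only [inner_sub_left, inner_sub_right, inner_add_left, inner_add_right,
    real_inner_smul_left, real_inner_smul_right]
  simp only [real_inner_comm Pn Lk, real_inner_comm Ts Lk, real_inner_comm Pn1 Lk,
    real_inner_comm On1 Lk, real_inner_comm Pn Ls, real_inner_comm Ts Ls,
    real_inner_comm Pn1 Ls, real_inner_comm On1 Ls, real_inner_comm Ts Pn,
    real_inner_comm Pn1 Pn, real_inner_comm On1 Pn, real_inner_comm Pn1 Ts,
    real_inner_comm On1 Ts, real_inner_comm On1 Pn1, real_inner_comm Ls Lk]
  field_simp
  ring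

lemma edge_even (ρ : ℝ) (hρ : 0 < ρ) (Lk Ls Pn Pn1 On Ts : E) :
    2*(⟪Lk + ρ•(Pn - Pn1), Pn - Ts⟫ - ⟪Lk + ρ•(On - Pn1), Pn1 - Ts⟫ - ⟪Ls, Pn - Pn1⟫)
    = (1/ρ)*(‖(Lk + ρ•(Pn - Pn1)) - Ls‖^2 - ‖Lk - Ls‖^2)
      + ρ*‖On - Pn1‖^2 + ρ*(‖Pn - Ts‖^2 - ‖On - Ts‖^2) := by
  have h := hρ.ne'
  simp only [← real_inner_self_eq_norm_sq]
  simp only [inner_sub_left, inner_sub_right, inner_add_left, inner_add_right,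
    real_inner_smul_left, real_inner_smul_right]
  simp only [real_inner_comm Pn Lk, real_inner_comm Ts Lk, real_inner_comm Pn1 Lk,
    real_inner_comm On Lk, real_inner_comm Pn Ls, real_inner_comm Ts Ls,
    real_inner_comm Pn1 Ls, real_inner_comm On Ls, real_inner_comm Ts Pn,
    real_inner_comm Pn1 Pn, real_inner_comm On Pn, real_inner_comm Pn1 Ts,
    real_inner_comm On Ts, real_inner_comm On Pn1, real_inner_comm Ls Lk]
  field_simp
  ring

end

lemma sum_workers (M : ℕ) (g : ℕ → ℝ) :
    ∑ n ∈ Icc 1 (2*M), g n = ∑ j ∈ range M, g (2*j+1) + ∑ j ∈ range M, g (2*j+2) := by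
  induction M with
  | zero => simp
  | succ m ih =>
    have h1 : 2*(m+1) = (2*m+1) + 1 := by ring
    rw [h1, Finset.sum_Icc_succ_top (by omega), Finset.sum_Icc_succ_top (by omega), ih,
      sum_range_succ, sum_range_succ]
    ring

lemma sum_edges (M : ℕ) (hM : 1 ≤ M) (g : ℕ → ℝ) :
    ∑ n ∈ Icc 1 (2*M - 1), g n
      = ∑ j ∈ range M, g (2*j+1) + ∑ j ∈ range (M-1), g (2*j+2) := by
  induction M with
  | zero => omega
  | succ m ih =>
    rcases Nat.eq_zero_or_pos m with hm | hm
    · subst hm; simp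
    · have h1 : 2*(m+1) - 1 = (2*m - 1 + 1) + 1 := by omega
      have h2 : 2*m - 1 + 1 = 2*m := by omega
      rw [h1, Finset.sum_Icc_succ_top (by omega), Finset.sum_Icc_succ_top (by omega),
        h2, ih hm, sum_range_succ (fun j => g (2*j+1)) m]
      have h3 : m + 1 - 1 = (m - 1) + 1 := by omega
      rw [h3, sum_range_succ (fun j => g (2*j+2)) (m-1)]
      have h4 : 2*(m-1)+2 = 2*m - 1 + 1 := by omega
      have h5 : 2*m+1 = 2*m - 1 + 1 + 1 := by omega
      rw [h4, h5]
      simp only [h2]; ring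

lemma sum_filter_odd (M : ℕ) (g : ℕ → ℝ) :
    ∑ n ∈ (Icc 1 (2*M)).filter (fun n => Odd n), g n = ∑ j ∈ range M, g (2*j+1) := by
  rw [Finset.sum_filter, sum_workers]
  have h1 : ∀ j : ℕ, Odd (2*j+1) := fun j => ⟨j, by ring⟩
  have h2 : ∀ j : ℕ, ¬ Odd (2*j+2) := by
    intro j h; rcases h with ⟨r, hr⟩; omega
  simp [h1, h2]

lemma sum_filter_odd_gt (M : ℕ) (hM : 1 ≤ M) (g : ℕ → ℝ) :
    ∑ n ∈ (Icc 1 (2*M)).filter (fun n => Odd n ∧ 1 < n), g n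
      = ∑ j ∈ range (M-1), g (2*j+3) := by
  rw [Finset.sum_filter, sum_workers]
  have h2 : ∀ j : ℕ, ¬ (Odd (2*j+2) ∧ 1 < 2*j+2) := by
    rintro j ⟨⟨r, hr⟩, -⟩; omega
  have h1 : ∀ j : ℕ, (if Odd (2*j+1) ∧ 1 < 2*j+1 then g (2*j+1) else 0)
      = if 1 ≤ j then g (2*j+1) else 0 := by
    intro j
    rcases Nat.eq_zero_or_pos j with h | h
    · subst h; rw [if_neg (by rintro ⟨-, hh⟩; omega), if_neg (by omega)]
    · have : Odd (2*j+1) ∧ 1 < 2*j+1 := ⟨⟨j, by ring⟩, by omega⟩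
      rw [if_pos this, if_pos (by omega : 1 ≤ j)]
  simp only [h1, h2, if_false, add_zero]
  have hM' : M = (M-1) + 1 := by omega
  rw [hM', Finset.sum_range_succ']
  have harg : ∀ j : ℕ, 2*(j+1)+1 = 2*j+3 := fun j => by omega
  simp [harg]

lemma sum_shift (M : ℕ) (hM : 1 ≤ M) (h : ℕ → ℝ) :
    ∑ j ∈ range M, (if j = 0 then 0 else h j) = ∑ j ∈ range (M-1), h (j+1) := by
  have hM' : M = (M-1) + 1 := by omega
  rw [hM', Finset.sum_range_succ']
  simp [Nat.succ_ne_zero]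

lemma sum_peel_last (M : ℕ) (hM : 1 ≤ M) (h : ℕ → ℝ) :
    ∑ j ∈ range M, (if j = M - 1 then 0 else h j) = ∑ j ∈ range (M-1), h j := by
  have hM' : M = (M-1) + 1 := by omega
  rw [hM', Finset.sum_range_succ]
  simp only [Nat.add_sub_cancel]
  rw [Finset.sum_congr rfl (fun j hj => by
    rw [if_neg]; exact fun h' => by simp at hj; omega)]
  simp
/-- The unaugmented Lagrangian `L_0({θ_n}, {λ_n})`. -/
noncomputable def L0 {E : Type*} [NormedAddCommGroup E] [InnerProductSpace ℝ E]
    (N : ℕ) (f : ℕ → E → ℝ) (th la : ℕ → E) : ℝ :=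
  ∑ n ∈ Finset.Icc 1 N, f n (th n)
    + ∑ n ∈ Finset.Icc 1 (N-1), ⟪la n, th n - th (n+1)⟫

theorem gadmm_lyapunov_monotone
    {E : Type*} [NormedAddCommGroup E] [InnerProductSpace ℝ E] [FiniteDimensional ℝ E]
    (N : ℕ) (hN : 2 ≤ N) (hNeven : Even N)
    (f : ℕ → E → ℝ) (hconv : ∀ n, ConvexOn ℝ Set.univ (f n))
    (ρ : ℝ) (hρ : 0 < ρ)
    (θ lam : ℕ → ℕ → E)
    -- (a) head updates: interior odd workers 1 < n ≤ N
    (hHead : ∀ k n, Odd n → 1 < n → n ≤ N → ∀ x : E,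
      f n (θ (k+1) n) + ⟪lam k (n-1), θ k (n-1) - θ (k+1) n⟫
        + ⟪lam k n, θ (k+1) n - θ k (n+1)⟫
        + ρ/2 * ‖θ k (n-1) - θ (k+1) n‖^2 + ρ/2 * ‖θ (k+1) n - θ k (n+1)‖^2
      ≤ f n x + ⟪lam k (n-1), θ k (n-1) - x⟫ + ⟪lam k n, x - θ k (n+1)⟫
        + ρ/2 * ‖θ k (n-1) - x‖^2 + ρ/2 * ‖x - θ k (n+1)‖^2)
    -- (a) head update for the first worker n = 1
    (hHead1 : ∀ k, ∀ x : E,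
      f 1 (θ (k+1) 1) + ⟪lam k 1, θ (k+1) 1 - θ k 2⟫ + ρ/2 * ‖θ (k+1) 1 - θ k 2‖^2
      ≤ f 1 x + ⟪lam k 1, x - θ k 2⟫ + ρ/2 * ‖x - θ k 2‖^2)
    -- (b) tail updates: even workers 0 < n < N
    (hTail : ∀ k n, Even n → 0 < n → n < N → ∀ x : E,
      f n (θ (k+1) n) + ⟪lam k (n-1), θ (k+1) (n-1) - θ (k+1) n⟫
        + ⟪lam k n, θ (k+1) n - θ (k+1) (n+1)⟫
        + ρ/2 * ‖θ (k+1) (n-1) - θ (k+1) n‖^2 + ρ/2 * ‖θ (k+1) n - θ (k+1) (n+1)‖^2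
      ≤ f n x + ⟪lam k (n-1), θ (k+1) (n-1) - x⟫ + ⟪lam k n, x - θ (k+1) (n+1)⟫
        + ρ/2 * ‖θ (k+1) (n-1) - x‖^2 + ρ/2 * ‖x - θ (k+1) (n+1)‖^2)
    -- (b) tail update for the last worker n = N
    (hTailN : ∀ k, ∀ x : E,
      f N (θ (k+1) N) + ⟪lam k (N-1), θ (k+1) (N-1) - θ (k+1) N⟫
        + ρ/2 * ‖θ (k+1) (N-1) - θ (k+1) N‖^2
      ≤ f N x + ⟪lam k (N-1), θ (k+1) (N-1) - x⟫ + ρ/2 * ‖θ (k+1) (N-1) - x‖^2)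
    -- (c) dual updates
    (hDual : ∀ k n, 1 ≤ n → n ≤ N - 1 →
      lam (k+1) n = lam k n + ρ • (θ (k+1) n - θ (k+1) (n+1)))
    (θstar : E) (lamstar : ℕ → E)
    (hsaddle : ∀ (th la : ℕ → E),
      L0 N f (fun _ => θstar) la ≤ L0 N f (fun _ => θstar) lamstar ∧
      L0 N f (fun _ => θstar) lamstar ≤ L0 N f th lamstar) :
    ∀ k : ℕ,
      (1/ρ) * ∑ n ∈ Icc 1 (N-1), ‖lam (k+1) n - lamstar n‖^2
        + ρ * ∑ n ∈ (Icc 1 N).filter (fun n => Odd n ∧ 1 < n), ‖θ (k+1) (n-1) - θstar‖^2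
        + ρ * ∑ n ∈ (Icc 1 N).filter (fun n => Odd n), ‖θ (k+1) (n+1) - θstar‖^2
      ≤ (1/ρ) * ∑ n ∈ Icc 1 (N-1), ‖lam k n - lamstar n‖^2
        + ρ * ∑ n ∈ (Icc 1 N).filter (fun n => Odd n ∧ 1 < n), ‖θ k (n-1) - θstar‖^2
        + ρ * ∑ n ∈ (Icc 1 N).filter (fun n => Odd n), ‖θ k (n+1) - θstar‖^2 := by
  intro k
  obtain ⟨M, hNM⟩ : ∃ M, N = 2 * M := by
    obtain ⟨m, hm⟩ := hNeven; exact ⟨m, by omega⟩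
  subst hNM
  have hM : 1 ≤ M := by omega
  have i1 : ∀ j : ℕ, 2*j+1+1 = 2*j+2 := fun j => by omega
  have i2 : ∀ j : ℕ, 2*j+2+1 = 2*j+3 := fun j => by omega
  have i3 : ∀ j : ℕ, 2*j+3-1 = 2*j+2 := fun j => by omega
  have i5 : ∀ j : ℕ, 2*(j+1) = 2*j+2 := fun j => by omega
  -- odd worker inequalities
  have hOdd : ∀ j ∈ range M,
      f (2*j+1) (θ (k+1) (2*j+1))
        + ⟪lam k (2*j+1) + ρ • (θ (k+1) (2*j+1) - θ k (2*j+2)), θ (k+1) (2*j+1) - θstar⟫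
        - (if j = 0 then 0 else
            ⟪lam k (2*j) + ρ • (θ k (2*j) - θ (k+1) (2*j+1)), θ (k+1) (2*j+1) - θstar⟫)
      ≤ f (2*j+1) θstar := by
    intro j hj
    have hjM : j < M := mem_range.mp hj
    rcases Nat.eq_zero_or_pos j with h0 | h0
    · subst h0
      norm_num
      have hlin := linearize (f 1) (hconv 1) 0 (lam k 1) 0 (θ k 2) (θ (k+1) 1) 0 ρ
        le_rfl hρ.le (fun x => by simpa using hHead1 k x) θstar
      have hv : lam k 1 - 0 + (0:ℝ) • (θ (k+1) 1 - 0) + ρ • (θ (k+1) 1 - θ k 2)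
          = lam k 1 + ρ • (θ (k+1) 1 - θ k 2) := by module
      rw [hv] at hlin
      linarith
    · have hlin := linearize (f (2*j+1)) (hconv (2*j+1)) (lam k (2*j)) (lam k (2*j+1))
        (θ k (2*j)) (θ k (2*j+2)) (θ (k+1) (2*j+1)) ρ ρ hρ.le hρ.le
        (fun x => hHead k (2*j+1) ⟨j, by ring⟩ (by omega) (by omega) x) θstar
      have hv : lam k (2*j+1) - lam k (2*j) + ρ • (θ (k+1) (2*j+1) - θ k (2*j))
            + ρ • (θ (k+1) (2*j+1) - θ k (2*j+2))
          = (lam k (2*j+1) + ρ • (θ (k+1) (2*j+1) - θ k (2*j+2)))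
            - (lam k (2*j) + ρ • (θ k (2*j) - θ (k+1) (2*j+1))) := by module
      rw [hv, inner_sub_left] at hlin
      rw [if_neg (by omega : ¬ j = 0)]
      linarith
  -- even worker inequalities
  have hEven : ∀ j ∈ range M,
      f (2*j+2) (θ (k+1) (2*j+2))
        + (if j = M - 1 then 0 else ⟪lam (k+1) (2*j+2), θ (k+1) (2*j+2) - θstar⟫)
        - ⟪lam (k+1) (2*j+1), θ (k+1) (2*j+2) - θstar⟫
      ≤ f (2*j+2) θstar := by
    intro j hj
    have hjM : j < M := mem_range.mp hj
    rcases eq_or_ne j (M-1) with h0 | h0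
    · subst h0
      have j1 : 2*(M-1)+2 = 2*M := by omega
      have j2 : 2*(M-1)+1 = 2*M-1 := by omega
      rw [if_pos rfl, j1, j2]
      have hlin := linearize (f (2*M)) (hconv (2*M)) (lam k (2*M-1)) 0
        (θ (k+1) (2*M-1)) 0 (θ (k+1) (2*M)) ρ 0 hρ.le le_rfl
        (fun x => by simpa using hTailN k x) θstar
      have hdu := hDual k (2*M-1) (by omega) (by omega)
      have j3 : 2*M-1+1 = 2*M := by omega
      rw [j3] at hdu
      have hv : (0:E) - lam k (2*M-1) + ρ • (θ (k+1) (2*M) - θ (k+1) (2*M-1))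
            + (0:ℝ) • (θ (k+1) (2*M) - 0)
          = -(lam k (2*M-1) + ρ • (θ (k+1) (2*M-1) - θ (k+1) (2*M))) := by module
      rw [hv, ← hdu, inner_neg_left] at hlin
      linarith
    · rw [if_neg h0]
      have hlin := linearize (f (2*j+2)) (hconv (2*j+2)) (lam k (2*j+1)) (lam k (2*j+2))
        (θ (k+1) (2*j+1)) (θ (k+1) (2*j+3)) (θ (k+1) (2*j+2)) ρ ρ hρ.le hρ.le
        (fun x => hTail k (2*j+2) ⟨j+1, by ring⟩ (by omega) (by omega) x) θstar
      have hd1 := hDual k (2*j+1) (by omega) (by omega)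
      have hd2 := hDual k (2*j+2) (by omega) (by omega)
      rw [i1 j] at hd1
      rw [i2 j] at hd2
      have hv : lam k (2*j+2) - lam k (2*j+1) + ρ • (θ (k+1) (2*j+2) - θ (k+1) (2*j+1))
            + ρ • (θ (k+1) (2*j+2) - θ (k+1) (2*j+3))
          = (lam k (2*j+2) + ρ • (θ (k+1) (2*j+2) - θ (k+1) (2*j+3)))
            - (lam k (2*j+1) + ρ • (θ (k+1) (2*j+1) - θ (k+1) (2*j+2))) := by module
      rw [hv, ← hd2, ← hd1, inner_sub_left] at hlin
      linarith
  -- per-edge identities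
  have hOddId : ∀ j ∈ range M,
      (2:ℝ) * (⟪lam k (2*j+1) + ρ • (θ (k+1) (2*j+1) - θ k (2*j+2)), θ (k+1) (2*j+1) - θstar⟫
          - ⟪lam (k+1) (2*j+1), θ (k+1) (2*j+2) - θstar⟫
          - ⟪lamstar (2*j+1), θ (k+1) (2*j+1) - θ (k+1) (2*j+2)⟫)
      = (1/ρ) * (‖lam (k+1) (2*j+1) - lamstar (2*j+1)‖^2 - ‖lam k (2*j+1) - lamstar (2*j+1)‖^2)
        + ρ * ‖θ (k+1) (2*j+1) - θ k (2*j+2)‖^2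
        + ρ * (‖θ (k+1) (2*j+2) - θstar‖^2 - ‖θ k (2*j+2) - θstar‖^2) := by
    intro j hj
    have hjM : j < M := mem_range.mp hj
    have hd := hDual k (2*j+1) (by omega) (by omega)
    rw [i1 j] at hd
    rw [hd]
    exact edge_odd ρ hρ (lam k (2*j+1)) (lamstar (2*j+1)) (θ (k+1) (2*j+1))
      (θ (k+1) (2*j+2)) (θ k (2*j+2)) θstar
  have hEvenId : ∀ j ∈ range (M-1),
      (2:ℝ) * (⟪lam (k+1) (2*j+2), θ (k+1) (2*j+2) - θstar⟫
          - ⟪lam k (2*j+2) + ρ • (θ k (2*j+2) - θ (k+1) (2*j+3)), θ (k+1) (2*j+3) - θstar⟫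
          - ⟪lamstar (2*j+2), θ (k+1) (2*j+2) - θ (k+1) (2*j+3)⟫)
      = (1/ρ) * (‖lam (k+1) (2*j+2) - lamstar (2*j+2)‖^2 - ‖lam k (2*j+2) - lamstar (2*j+2)‖^2)
        + ρ * ‖θ k (2*j+2) - θ (k+1) (2*j+3)‖^2
        + ρ * (‖θ (k+1) (2*j+2) - θstar‖^2 - ‖θ k (2*j+2) - θstar‖^2) := by
    intro j hj
    have hjM : j < M - 1 := mem_range.mp hj
    have hd := hDual k (2*j+2) (by omega) (by omega)
    rw [i2 j] at hd
    rw [hd]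
    exact edge_even ρ hρ (lam k (2*j+2)) (lamstar (2*j+2)) (θ (k+1) (2*j+2))
      (θ (k+1) (2*j+3)) (θ k (2*j+2)) θstar
  -- summed worker inequalities
  have hA := Finset.sum_le_sum hOdd
  rw [Finset.sum_sub_distrib, Finset.sum_add_distrib] at hA
  have hshift : (∑ j ∈ range M, if j = 0 then (0:ℝ) else
        ⟪lam k (2*j) + ρ • (θ k (2*j) - θ (k+1) (2*j+1)), θ (k+1) (2*j+1) - θstar⟫)
      = ∑ j ∈ range (M-1),
        ⟪lam k (2*j+2) + ρ • (θ k (2*j+2) - θ (k+1) (2*j+3)), θ (k+1) (2*j+3) - θstar⟫ := by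
    rw [sum_shift M hM]
    refine Finset.sum_congr rfl fun j _ => ?_
    simp only [i5, i2]
  rw [hshift] at hA
  have hB := Finset.sum_le_sum hEven
  rw [Finset.sum_sub_distrib, Finset.sum_add_distrib] at hB
  have hpeel : (∑ j ∈ range M, if j = M - 1 then (0:ℝ) else
        ⟪lam (k+1) (2*j+2), θ (k+1) (2*j+2) - θstar⟫)
      = ∑ j ∈ range (M-1), ⟪lam (k+1) (2*j+2), θ (k+1) (2*j+2) - θstar⟫ :=
    sum_peel_last M hM _
  rw [hpeel] at hB
  -- saddle point inequality
  have hs := (hsaddle (θ (k+1)) lamstar).2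
  simp only [L0] at hs
  simp only [sub_self, inner_zero_right, Finset.sum_const_zero, add_zero] at hs
  rw [sum_workers M (fun n => f n θstar), sum_workers M (fun n => f n (θ (k+1) n)),
    sum_edges M hM (fun n => (⟪lamstar n, θ (k+1) n - θ (k+1) (n+1)⟫ : ℝ))] at hs
  simp only [i1, i2] at hs
  -- summed identities
  have F2 : (2:ℝ) * ((∑ j ∈ range M,
        ⟪lam k (2*j+1) + ρ • (θ (k+1) (2*j+1) - θ k (2*j+2)), θ (k+1) (2*j+1) - θstar⟫)
      - (∑ j ∈ range M, ⟪lam (k+1) (2*j+1), θ (k+1) (2*j+2) - θstar⟫)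
      - (∑ j ∈ range M, ⟪lamstar (2*j+1), θ (k+1) (2*j+1) - θ (k+1) (2*j+2)⟫))
      = (1/ρ) * ((∑ j ∈ range M, ‖lam (k+1) (2*j+1) - lamstar (2*j+1)‖^2)
          - (∑ j ∈ range M, ‖lam k (2*j+1) - lamstar (2*j+1)‖^2))
        + ρ * (∑ j ∈ range M, ‖θ (k+1) (2*j+1) - θ k (2*j+2)‖^2)
        + ρ * ((∑ j ∈ range M, ‖θ (k+1) (2*j+2) - θstar‖^2)
          - (∑ j ∈ range M, ‖θ k (2*j+2) - θstar‖^2)) := by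
    rw [← Finset.sum_sub_distrib, ← Finset.sum_sub_distrib, Finset.mul_sum]
    rw [Finset.sum_congr rfl hOddId]
    simp only [Finset.sum_add_distrib, Finset.sum_sub_distrib, ← Finset.mul_sum]
  have F3 : (2:ℝ) * ((∑ j ∈ range (M-1), ⟪lam (k+1) (2*j+2), θ (k+1) (2*j+2) - θstar⟫)
      - (∑ j ∈ range (M-1),
        ⟪lam k (2*j+2) + ρ • (θ k (2*j+2) - θ (k+1) (2*j+3)), θ (k+1) (2*j+3) - θstar⟫)
      - (∑ j ∈ range (M-1), ⟪lamstar (2*j+2), θ (k+1) (2*j+2) - θ (k+1) (2*j+3)⟫))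
      = (1/ρ) * ((∑ j ∈ range (M-1), ‖lam (k+1) (2*j+2) - lamstar (2*j+2)‖^2)
          - (∑ j ∈ range (M-1), ‖lam k (2*j+2) - lamstar (2*j+2)‖^2))
        + ρ * (∑ j ∈ range (M-1), ‖θ k (2*j+2) - θ (k+1) (2*j+3)‖^2)
        + ρ * ((∑ j ∈ range (M-1), ‖θ (k+1) (2*j+2) - θstar‖^2)
          - (∑ j ∈ range (M-1), ‖θ k (2*j+2) - θstar‖^2)) := by
    rw [← Finset.sum_sub_distrib, ← Finset.sum_sub_distrib, Finset.mul_sum]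
    rw [Finset.sum_congr rfl hEvenId]
    simp only [Finset.sum_add_distrib, Finset.sum_sub_distrib, ← Finset.mul_sum]
  -- rewrite goal
  rw [sum_edges M hM (fun n => ‖lam (k+1) n - lamstar n‖^2),
    sum_filter_odd_gt M hM (fun n => ‖θ (k+1) (n-1) - θstar‖^2),
    sum_filter_odd M (fun n => ‖θ (k+1) (n+1) - θstar‖^2),
    sum_edges M hM (fun n => ‖lam k n - lamstar n‖^2),
    sum_filter_odd_gt M hM (fun n => ‖θ k (n-1) - θstar‖^2),
    sum_filter_odd M (fun n => ‖θ k (n+1) - θstar‖^2)]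
  simp only [i1, i3]
  have hDO : (0:ℝ) ≤ ∑ j ∈ range M, ‖θ (k+1) (2*j+1) - θ k (2*j+2)‖^2 :=
    Finset.sum_nonneg fun j _ => by positivity
  have hDE : (0:ℝ) ≤ ∑ j ∈ range (M-1), ‖θ k (2*j+2) - θ (k+1) (2*j+3)‖^2 :=
    Finset.sum_nonneg fun j _ => by positivity
  have hρDO := mul_nonneg hρ.le hDO
  have hρDE := mul_nonneg hρ.le hDE
  linarith [hA, hB, hs, F2, F3, hρDO, hρDE]
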